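/- Let (X, μ) be a standard Borel probability space and let T : X → X be a measurable bijection that is non-singular (T maps μ-null sets to μ-null sets and conversely) and essentially free, i.e. μ({x ∈ X : T x = x}) = 0. Then there exists a measurable set A ⊆ X such that μ(A ∩ T(A)) = 0 and μ(X \ (T(A) ∪ A ∪ T⁻¹(A))) = 0. -/

import Mathlib

open MeasureTheory

/-- For a non-singular essentially free measurable bijection `T` of a standard
probability space `(X, μ)` there is a measurable set `A` with `μ(A ∩ T(A)) = 0`
and `T(A) ∪ A ∪ T⁻¹(A)` conull. -/
theorem exists_maximal_wandering_set
    (X : Type*) [MeasurableSpace X] [StandardBorelSpace X]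
    (μ : Measure X) [IsProbabilityMeasure μ]
    (T : X → X) (hTmeas : Measurable T) (hTbij : Function.Bijective T)
    (hns : ∀ A : Set X, MeasurableSet A → (μ A = 0 ↔ μ (T '' A) = 0))
    (hfree : μ {x : X | T x = x} = 0) :
    ∃ A : Set X, MeasurableSet A ∧ μ (A ∩ T '' A) = 0 ∧
      μ (Set.univ \ (T '' A ∪ A ∪ T ⁻¹' A)) = 0 := by
  -- T is a measurable embedding
  have hemb : MeasurableEmbedding T := hTmeas.measurableEmbedding hTbij.injective
  -- countable separating family
  obtain ⟨B, hBmeas, hBsep⟩ :=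
    exists_seq_separating X MeasurableSet.empty (Set.univ : Set X)
  -- wandering pieces
  set C : ℕ → Set X := fun n =>
    Nat.rec (B (n / 2) \ T ⁻¹' (B (n / 2)))
      (fun _ _ => T ⁻¹' (B (n / 2)) \ B (n / 2)) (n % 2) with hC
  have hCmeas : ∀ n, MeasurableSet (C n) := by
    intro n
    rcases Nat.even_or_odd n with ⟨k, hk⟩ | ⟨k, hk⟩
    · have : n % 2 = 0 := by omega
      simp only [hC, this]
      exact (hBmeas _).diff (hTmeas (hBmeas _))
    · have : n % 2 = 1 := by omega
      simp only [hC, this]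
      exact (hTmeas (hBmeas _)).diff (hBmeas _)
  have hCwand : ∀ n, C n ∩ T '' C n = ∅ := by
    intro n
    rcases Nat.even_or_odd n with ⟨k, hk⟩ | ⟨k, hk⟩
    · have h2 : n % 2 = 0 := by omega
      simp only [hC, h2]
      ext x; simp only [Set.mem_inter_iff, Set.mem_image, Set.mem_diff,
        Set.mem_preimage, Set.mem_empty_iff_false, iff_false]
      rintro ⟨⟨hx1, _⟩, y, ⟨_, hy2⟩, rfl⟩
      exact hy2 hx1
    · have h2 : n % 2 = 1 := by omega
      simp only [hC, h2]
      ext x; simp only [Set.mem_inter_iff, Set.mem_image, Set.mem_diff,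
        Set.mem_preimage, Set.mem_empty_iff_false, iff_false]
      rintro ⟨⟨_, hx2⟩, y, ⟨hy1, _⟩, rfl⟩
      exact hx2 hy1
  -- inductively build A
  set A : ℕ → Set X := fun n =>
    Nat.rec (∅ : Set X)
      (fun m Am => Am ∪ (C m \ (T '' Am ∪ Am ∪ T ⁻¹' Am))) n with hA
  have hAsucc : ∀ n, A (n + 1) = A n ∪ (C n \ (T '' A n ∪ A n ∪ T ⁻¹' A n)) :=
    fun n => rfl
  have hAmeas : ∀ n, MeasurableSet (A n) := by
    intro n; induction n with
    | zero => exact MeasurableSet.empty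
    | succ n ih =>
        rw [hAsucc]
        exact ih.union ((hCmeas n).diff
          (((hemb.measurableSet_image.2 ih).union ih).union (hTmeas ih)))
  have hAmono : ∀ n, A n ⊆ A (n + 1) := by
    intro n; rw [hAsucc]; exact Set.subset_union_left
  have hAmono' : ∀ m n, m ≤ n → A m ⊆ A n := by
    intro m n h
    induction n with
    | zero => cases Nat.le_zero.mp h; exact subset_rfl
    | succ n ih =>
        rcases Nat.le_succ_iff.mp h with h' | h'
        · exact (ih h').trans (hAmono n)
        · cases h'; exact subset_rfl
  have hAwand : ∀ n, A n ∩ T '' A n = ∅ := by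
    intro n; induction n with
    | zero => show (∅ : Set X) ∩ T '' ∅ = ∅; simp
    | succ n ih =>
        rw [hAsucc]
        ext x
        simp only [Set.mem_inter_iff, Set.mem_union, Set.mem_diff, Set.mem_image,
          Set.mem_preimage, Set.mem_empty_iff_false, iff_false]
        rintro ⟨hx1, y, hy, rfl⟩
        rcases hx1 with hx1 | ⟨hx1, hx1'⟩ <;> rcases hy with hy | ⟨hy, hy'⟩
        · exact absurd (Set.mem_inter hx1 (Set.mem_image_of_mem T hy))
            (by rw [ih]; exact id)
        · exact hy' (Or.inr hx1)
        · exact hx1' (Or.inl (Or.inl (Set.mem_image_of_mem T hy)))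
        · exact absurd (Set.mem_inter hx1 (Set.mem_image_of_mem T hy))
            (by rw [hCwand n]; exact id)
  refine ⟨⋃ n, A n, MeasurableSet.iUnion hAmeas, ?_, ?_⟩
  · -- A ∩ T(A) empty
    have : (⋃ n, A n) ∩ T '' ⋃ n, A n = ∅ := by
      ext x
      simp only [Set.mem_inter_iff, Set.mem_iUnion, Set.image_iUnion,
        Set.mem_empty_iff_false, iff_false]
      rintro ⟨⟨m, hm⟩, k, hk⟩
      have h1 : x ∈ A (max m k) := hAmono' m _ (le_max_left _ _) hm
      have h2 : x ∈ T '' A (max m k) :=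
        Set.image_mono (f := T) (hAmono' k _ (le_max_right _ _)) hk
      exact absurd (Set.mem_inter h1 h2) (by rw [hAwand]; exact id)
    rw [this]; simp
  · -- conull
    have hcover : ∀ n, C n ⊆ T '' (⋃ n, A n) ∪ (⋃ n, A n) ∪ T ⁻¹' (⋃ n, A n) := by
      intro n x hx
      by_cases h : x ∈ T '' A n ∪ A n ∪ T ⁻¹' A n
      · rcases h with (h | h) | h
        · exact Or.inl (Or.inl (Set.image_mono (f := T) (Set.subset_iUnion A n) h))
        · exact Or.inl (Or.inr (Set.subset_iUnion A n h))
        · exact Or.inr (Set.subset_iUnion A n h)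
      · have : x ∈ A (n + 1) := by rw [hAsucc]; exact Or.inr ⟨hx, h⟩
        exact Or.inl (Or.inr (Set.mem_iUnion.2 ⟨n + 1, this⟩))
    have hsub : Set.univ \ (T '' (⋃ n, A n) ∪ (⋃ n, A n) ∪ T ⁻¹' (⋃ n, A n)) ⊆
        {x : X | T x = x} := by
      rintro x ⟨-, hx⟩
      by_contra hne
      have := hBsep x (Set.mem_univ x) (T x) (Set.mem_univ _)
      have hex : ∃ m, ¬ (x ∈ B m ↔ T x ∈ B m) := by
        by_contra hall
        push_neg at hall
        exact hne (this hall).symm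
      obtain ⟨m, hm⟩ := hex
      rw [iff_iff_implies_and_implies, not_and_or] at hm
      rcases hm with hm | hm
      · push_neg at hm
        have hxC : x ∈ C (2 * m) := by
          have h2 : (2 * m) % 2 = 0 := by omega
          have hd : (2 * m) / 2 = m := by omega
          simp only [hC, h2, hd]
          exact ⟨hm.1, hm.2⟩
        exact hx (hcover (2 * m) hxC)
      · push_neg at hm
        have hxC : x ∈ C (2 * m + 1) := by
          have h2 : (2 * m + 1) % 2 = 1 := by omega
          have hd : (2 * m + 1) / 2 = m := by omega
          simp only [hC, h2, hd]
          exact ⟨hm.1, hm.2⟩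
        exact hx (hcover (2 * m + 1) hxC)
    exact measure_mono_null hsub hfree
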